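/- If n ≥ 3 and A ⊆ {1, 2, ..., 2n} satisfies |A| ≥ n + 1, then there exist integers 0 ≤ b₁ < b₂ < b₃ (non-negative, distinct) whose three pairwise sums b₁+b₂, b₁+b₃, b₂+b₃ are all contained in A. -/
import Mathlib


theorem stmt_3 (n : ℕ) (hn : 3 ≤ n) (A : Finset ℤ)
    (hA : A ⊆ Finset.Icc 1 (2 * (n : ℤ))) (hcard : n + 1 ≤ A.card) :
    ∃ b₁ b₂ b₃ : ℤ, 0 ≤ b₁ ∧ b₁ < b₂ ∧ b₂ < b₃ ∧
      b₁ + b₂ ∈ A ∧ b₁ + b₃ ∈ A ∧ b₂ + b₃ ∈ A := by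
  induction n, hn using Nat.le_induction generalizing A with
  | base =>
      have h6 : Finset.Icc (1:ℤ) (2 * ((3:ℕ) : ℤ)) = {1,2,3,4,5,6} := by decide
      rw [h6] at hA
      have hmem : A ∈ ({1,2,3,4,5,6} : Finset ℤ).powerset := Finset.mem_powerset.mpr hA
      fin_cases hmem <;>
      first
      | exact absurd hcard (by decide)
      | exact ⟨0,1,2, by norm_num, by norm_num, by norm_num, by decide, by decide, by decide⟩
      | exact ⟨0,1,3, by norm_num, by norm_num, by norm_num, by decide, by decide, by decide⟩
      | exact ⟨0,1,4, by norm_num, by norm_num, by norm_num, by decide, by decide, by decide⟩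
      | exact ⟨0,1,5, by norm_num, by norm_num, by norm_num, by decide, by decide, by decide⟩
      | exact ⟨0,2,3, by norm_num, by norm_num, by norm_num, by decide, by decide, by decide⟩
      | exact ⟨0,2,4, by norm_num, by norm_num, by norm_num, by decide, by decide, by decide⟩
      | exact ⟨1,2,3, by norm_num, by norm_num, by norm_num, by decide, by decide, by decide⟩
      | exact ⟨1,2,4, by norm_num, by norm_num, by norm_num, by decide, by decide, by decide⟩
  | succ n hn IH =>
      have hA' : ∀ x ∈ A, 1 ≤ x ∧ x ≤ 2 * (n:ℤ) + 2 := by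
        intro x hx
        have := hA hx
        rw [Finset.mem_Icc] at this
        push_cast at this
        constructor <;> linarith [this.1, this.2]
      set B := A.filter (fun x => x ≤ 2 * (n:ℤ)) with hBdef
      have hBsub : B ⊆ Finset.Icc 1 (2 * (n : ℤ)) := by
        intro x hx
        rw [Finset.mem_filter] at hx
        rw [Finset.mem_Icc]
        exact ⟨(hA' x hx.1).1, hx.2⟩
      have hBA : B ⊆ A := Finset.filter_subset _ _
      by_cases hc : n + 1 ≤ B.card
      · obtain ⟨b₁, b₂, b₃, h0, h12, h23, m1, m2, m3⟩ := IH B hBsub hc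
        exact ⟨b₁, b₂, b₃, h0, h12, h23, hBA m1, hBA m2, hBA m3⟩
      · push_neg at hc
        -- both 2n+1 and 2n+2 are in A
        have hsub2 : ∀ c : ℤ, c ∉ A → A ⊆ B ∪ {2*(n:ℤ)+1, 2*(n:ℤ)+2} \ {c} := by
          intro c hc x hx
          have hb := hA' x hx
          rw [Finset.mem_union, Finset.mem_sdiff, Finset.mem_filter, Finset.mem_insert,
            Finset.mem_singleton, Finset.mem_singleton]
          by_cases h : x ≤ 2*(n:ℤ)
          · exact Or.inl ⟨hx, h⟩
          · right
            constructor
            · omega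
            · intro hxc; rw [hxc] at hx; exact hc hx
        have h1 : (2*(n:ℤ)+1) ∈ A := by
          by_contra h
          have hs := hsub2 _ h
          have := Finset.card_le_card hs
          have h2 : (({2*(n:ℤ)+1, 2*(n:ℤ)+2} : Finset ℤ) \ {2*(n:ℤ)+1}).card ≤ 1 := by
            have : (({2*(n:ℤ)+1, 2*(n:ℤ)+2} : Finset ℤ) \ {2*(n:ℤ)+1}) ⊆ {2*(n:ℤ)+2} := by
              intro x hx
              simp only [Finset.mem_sdiff, Finset.mem_insert, Finset.mem_singleton] at hx ⊢
              tauto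
            simpa using Finset.card_le_card this
          have := Finset.card_union_le B (({2*(n:ℤ)+1, 2*(n:ℤ)+2} : Finset ℤ) \ {2*(n:ℤ)+1})
          omega
        have h2 : (2*(n:ℤ)+2) ∈ A := by
          by_contra h
          have hs := hsub2 _ h
          have := Finset.card_le_card hs
          have h2 : (({2*(n:ℤ)+1, 2*(n:ℤ)+2} : Finset ℤ) \ {2*(n:ℤ)+2}).card ≤ 1 := by
            have : (({2*(n:ℤ)+1, 2*(n:ℤ)+2} : Finset ℤ) \ {2*(n:ℤ)+2}) ⊆ {2*(n:ℤ)+1} := by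
              intro x hx
              simp only [Finset.mem_sdiff, Finset.mem_insert, Finset.mem_singleton] at hx ⊢
              tauto
            simpa using Finset.card_le_card this
          have := Finset.card_union_le B (({2*(n:ℤ)+1, 2*(n:ℤ)+2} : Finset ℤ) \ {2*(n:ℤ)+2})
          omega
        by_cases hodd : ∃ x ∈ B, Odd x
        · obtain ⟨x, hxB, m, hm⟩ := hodd
          have hx1 : 1 ≤ x := (hA' x (hBA hxB)).1
          have hx2 : x ≤ 2*(n:ℤ) := (Finset.mem_filter.mp hxB).2
          refine ⟨m, m+1, 2*(n:ℤ)+1-m, by omega, by omega, by omega, ?_, ?_, ?_⟩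
          · have : m + (m+1) = x := by omega
            rw [this]; exact hBA hxB
          · have : m + (2*(n:ℤ)+1-m) = 2*(n:ℤ)+1 := by ring
            rw [this]; exact h1
          · have : (m+1) + (2*(n:ℤ)+1-m) = 2*(n:ℤ)+2 := by ring
            rw [this]; exact h2
        · push_neg at hodd
          -- B consists of even numbers, and has card ≥ n
          have hcardB : n ≤ B.card := by
            have hs : A ⊆ B ∪ {2*(n:ℤ)+1, 2*(n:ℤ)+2} := by
              intro x hx
              have hb := hA' x hx
              rw [Finset.mem_union, Finset.mem_filter, Finset.mem_insert, Finset.mem_singleton]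
              by_cases h : x ≤ 2*(n:ℤ)
              · exact Or.inl ⟨hx, h⟩
              · right; omega
            have := Finset.card_le_card hs
            have h2' : (({2*(n:ℤ)+1, 2*(n:ℤ)+2} : Finset ℤ)).card ≤ 2 :=
              (Finset.card_insert_le _ _).trans (by simp)
            have := Finset.card_union_le B ({2*(n:ℤ)+1, 2*(n:ℤ)+2} : Finset ℤ)
            omega
          set E := (Finset.Icc (1:ℤ) (n:ℤ)).image (fun k => 2*k) with hEdef
          have hBE : B ⊆ E := by
            intro x hx
            have hx1 : 1 ≤ x := (hA' x (hBA hx)).1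
            have hx2 : x ≤ 2*(n:ℤ) := (Finset.mem_filter.mp hx).2
            have hev : Even x := Int.not_odd_iff_even.mp (hodd x hx)
            obtain ⟨k, hk⟩ := hev
            rw [hEdef, Finset.mem_image]
            exact ⟨k, Finset.mem_Icc.mpr ⟨by omega, by omega⟩, by omega⟩
          have hEcard : E.card = n := by
            rw [hEdef, Finset.card_image_of_injective _ (fun a b h => by omega)]
            rw [Int.card_Icc]
            omega
          have hEB : E = B := (Finset.eq_of_subset_of_card_le hBE (by omega)).symm
          have hn3 : (3:ℤ) ≤ (n:ℤ) := by exact_mod_cast hn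
          have hmem : ∀ k : ℤ, 1 ≤ k → k ≤ n → 2*k ∈ A := by
            intro k h1k h2k
            apply hBA
            rw [← hEB, hEdef, Finset.mem_image]
            exact ⟨k, Finset.mem_Icc.mpr ⟨h1k, h2k⟩, rfl⟩
          refine ⟨0, 2, 4, by omega, by omega, by omega, ?_, ?_, ?_⟩
          · have : (0:ℤ) + 2 = 2*1 := by ring
            rw [this]; exact hmem 1 (by omega) (by omega)
          · have : (0:ℤ) + 4 = 2*2 := by ring
            rw [this]; exact hmem 2 (by omega) (by omega)
          · have : (2:ℤ) + 4 = 2*3 := by ring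
            rw [this]; exact hmem 3 (by omega) (by omega)
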